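/- The function G is differentiable on ℝ and its derivative is G′(β) = −β·∑_{l=1}^n ∑_{i ≠ l} ∏_{k ∉ {i, l}} (μ_k − β). In particular, if μ_1 < 0 < μ_n, then G′(β) > 0 for every β < μ_1. -/

import Mathlib

open Set Finset

lemma prod_hasDerivAt {n : ℕ} (μ : Fin n → ℝ) (s : Finset (Fin n)) (β : ℝ) :
    HasDerivAt (fun b => ∏ k ∈ s, (μ k - b))
      (-∑ l ∈ s, ∏ k ∈ s.erase l, (μ k - β)) β := by
  have h := HasDerivAt.fun_finsetProd (u := s) (f := fun k b => μ k - b)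
    (f' := fun _ => (-1 : ℝ)) (x := β)
    (fun i _ => by simpa using (hasDerivAt_id β).const_sub (μ i))
  simpa [Finset.sum_neg_distrib, ← Finset.sum_neg_distrib, mul_comm] using h

/-- `G` is differentiable with derivative
`G'(β) = -β·∑ₗ ∑_{i ≠ l} ∏_{k ∉ {i,l}} (μₖ - β)`; in the mixed case `μ₁ < 0 < μₙ`
this derivative is positive for every `β < μ₁`. -/
theorem G_deriv (n : ℕ) (hn : 2 ≤ n) (μ : Fin n → ℝ) (hμ : Monotone μ)
    (G : ℝ → ℝ)
    (hG : ∀ β : ℝ, G β = (∏ k, (μ k - β)) +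
      β * ∑ l, ∏ k ∈ Finset.univ.erase l, (μ k - β)) :
    (∀ β : ℝ, HasDerivAt G
      (-β * ∑ l, ∑ i ∈ Finset.univ.erase l,
        ∏ k ∈ (Finset.univ.erase l).erase i, (μ k - β)) β) ∧
    (μ ⟨0, by omega⟩ < 0 → 0 < μ ⟨n - 1, by omega⟩ →
      ∀ β : ℝ, β < μ ⟨0, by omega⟩ →
        0 < -β * ∑ l, ∑ i ∈ Finset.univ.erase l,
          ∏ k ∈ (Finset.univ.erase l).erase i, (μ k - β)) := by
  constructor
  · intro β
    have hGfun : G = fun b => (∏ k, (μ k - b)) +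
        b * ∑ l, ∏ k ∈ Finset.univ.erase l, (μ k - b) := funext hG
    have hP := prod_hasDerivAt μ Finset.univ β
    have hS : HasDerivAt (fun b => ∑ l, ∏ k ∈ Finset.univ.erase l, (μ k - b))
        (∑ l, -∑ i ∈ Finset.univ.erase l,
          ∏ k ∈ (Finset.univ.erase l).erase i, (μ k - β)) β :=
      HasDerivAt.fun_sum (fun l _ => prod_hasDerivAt μ (Finset.univ.erase l) β)
    have h := hP.fun_add ((hasDerivAt_id β).fun_mul hS)
    rw [hGfun]
    refine h.congr_deriv ?_
    simp only [id_eq, Finset.sum_neg_distrib]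
    ring
  · intro h0 _ β hβ
    have hβ0 : β < 0 := lt_trans hβ h0
    have hpos : ∀ k : Fin n, 0 < μ k - β := fun k =>
      sub_pos.mpr (lt_of_lt_of_le hβ (hμ (by simp [Fin.le_def])))
    apply mul_pos (by linarith)
    apply Finset.sum_pos
    · intro l _
      apply Finset.sum_pos
      · intro i _
        exact Finset.prod_pos fun k _ => hpos k
      · rw [← Finset.card_pos, Finset.card_erase_of_mem (by simp), Finset.card_univ,
          Fintype.card_fin]
        omega
    · rw [← Finset.card_pos, Finset.card_univ, Fintype.card_fin]; omega
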